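/- Let P and Q be probability measures on a standard Borel space X with P ≪ Q, let g : X → [0,∞] be a measurable version of dP/dQ, and define the relative density ratio map T : [0,∞] → [0,2] by T(u) = 2u/(u+1) for finite u and T(∞) = 2, and set r = T ∘ g (so r is a measurable version of the relative density ratio 2·dP/d(P+Q) up to normalization). Then for every measurable function φ : [0,∞] → [0,∞], ∫ φ( d(r♯P)/d(r♯Q)(y) ) d(r♯Q)(y) = ∫ φ( g(x) ) dQ(x); that is, the one-dimensional pushforward distributions r♯P and r♯Q preserve the φ-divergence of P and Q: D_φ(r♯P ∥ r♯Q) = D_φ(P ∥ Q). -/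

import Mathlib

open MeasureTheory
open scoped ENNReal

/-- The relative-density-ratio transformation `T(u) = 2u/(u+1)` for finite `u`,
with `T(∞) = 2`, mapping `[0,∞]` into `[0,2]`. -/
noncomputable def rdrTransform : ℝ≥0∞ → ℝ≥0∞ :=
  fun u => if u = ∞ then 2 else 2 * u / (u + 1)

/-- The inverse transformation `S(y) = y / (2 - y)` is a left inverse of `rdrTransform`. -/
lemma rdrTransform_left_inv (u : ℝ≥0∞) :
    rdrTransform u / (2 - rdrTransform u) = u := by
  unfold rdrTransform
  rcases eq_or_ne u ∞ with h | h
  · simp [h, ENNReal.div_zero]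
  · have hd0 : u + 1 ≠ 0 := by simp
    have hdt : u + 1 ≠ ∞ := by simp [h]
    have hsum : 2 / (u + 1) + 2 * u / (u + 1) = 2 := by
      rw [← ENNReal.add_div]
      have h2 : 2 + 2 * u = (u + 1) * 2 := by ring
      rw [h2, mul_div_assoc, ENNReal.mul_div_cancel hd0 hdt]
    have hfinb : 2 * u / (u + 1) ≠ ∞ := by
      simp [ENNReal.div_eq_top, hd0, ENNReal.mul_eq_top, h]
    have hfin : 2 / (u + 1) ≠ ∞ := by
      simp [ENNReal.div_eq_top, hd0]
    have hsub : 2 - 2 * u / (u + 1) = 2 / (u + 1) :=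
      ENNReal.sub_eq_of_eq_add hfinb hsum.symm
    have hb0 : (2 : ℝ≥0∞) / (u + 1) ≠ 0 := by
      simp [ENNReal.div_ne_zero, hdt]
    simp only [h, if_false]
    rw [hsub, eq_comm, ENNReal.eq_div_iff hb0 hfin]
    rw [div_eq_mul_inv, div_eq_mul_inv, mul_right_comm]

lemma rdrTransform_measurable : Measurable rdrTransform := by
  unfold rdrTransform
  exact Measurable.ite (measurableSet_singleton _) measurable_const
    ((measurable_const.mul measurable_id).div (measurable_id.add measurable_const))

/-- Let `P ≪ Q` be probability measures on a standard Borel space and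
`g` a measurable version of `dP/dQ`. With `r = T ∘ g` where `T(u) = 2u/(u+1)`
(`T(∞) = 2`) — so that `r` is a measurable version of the relative density ratio —
for every measurable `φ : [0,∞] → [0,∞]`,
`∫ φ(d(r♯P)/d(r♯Q)) d(r♯Q) = ∫ φ(g) dQ`; i.e. the one-dimensional pushforwards
`r♯P, r♯Q` preserve the φ-divergence: `D_φ(r♯P ∥ r♯Q) = D_φ(P ∥ Q)`. -/
theorem phi_divergence_preserved_by_relative_density_ratio
    {X : Type*} [MeasurableSpace X] [StandardBorelSpace X]
    (P Q : Measure X) [IsProbabilityMeasure P] [IsProbabilityMeasure Q]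
    (hPQ : P ≪ Q)
    (g : X → ℝ≥0∞) (hg : Measurable g) (hver : g =ᵐ[Q] P.rnDeriv Q) :
    ∀ φ : ℝ≥0∞ → ℝ≥0∞, Measurable φ →
      ∫⁻ y, φ ((P.map (rdrTransform ∘ g)).rnDeriv (Q.map (rdrTransform ∘ g)) y)
          ∂(Q.map (rdrTransform ∘ g))
        = ∫⁻ x, φ (g x) ∂Q := by
  intro φ hφ
  set S : ℝ≥0∞ → ℝ≥0∞ := fun y => y / (2 - y) with hSdef
  have hSmeas : Measurable S :=
    measurable_id.div (measurable_const.sub measurable_id)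
  have hr : Measurable (rdrTransform ∘ g) := rdrTransform_measurable.comp hg
  have hSr : ∀ x, S ((rdrTransform ∘ g) x) = g x := fun x =>
    rdrTransform_left_inv (g x)
  -- P is Q.withDensity g
  have hPd : P = Q.withDensity g := by
    rw [withDensity_congr_ae hver, Measure.withDensity_rnDeriv_eq P Q hPQ]
  -- the pushforward of P is the pushforward of Q with density S
  have hmap : P.map (rdrTransform ∘ g)
      = (Q.map (rdrTransform ∘ g)).withDensity S := by
    ext A hA
    rw [Measure.map_apply hr hA, withDensity_apply _ hA,
      setLIntegral_map hA hSmeas hr, hPd,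
      withDensity_apply _ (hr hA)]
    exact setLIntegral_congr_fun (hr hA) (fun x _ => (hSr x).symm)
  have hrn : (P.map (rdrTransform ∘ g)).rnDeriv (Q.map (rdrTransform ∘ g))
      =ᵐ[Q.map (rdrTransform ∘ g)] S := by
    rw [hmap]
    exact Measure.rnDeriv_withDensity _ hSmeas
  calc ∫⁻ y, φ ((P.map (rdrTransform ∘ g)).rnDeriv (Q.map (rdrTransform ∘ g)) y)
          ∂(Q.map (rdrTransform ∘ g))
      = ∫⁻ y, φ (S y) ∂(Q.map (rdrTransform ∘ g)) := by
        refine lintegral_congr_ae ?_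
        filter_upwards [hrn] with y hy
        rw [hy]
    _ = ∫⁻ x, φ (S ((rdrTransform ∘ g) x)) ∂Q := lintegral_map (hφ.comp hSmeas) hr
    _ = ∫⁻ x, φ (g x) ∂Q := by
        refine lintegral_congr fun x => ?_
        rw [hSr x]
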